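/- For every δ > 0 there exists a real ε with 0 < ε < 1/2 such that the following holds. Let D be the least natural number with (1−ε)^D < ε². Let a : ℕ → ℝ satisfy a(m) = 0 for m > D and a(k) = Σ_{i=0}^{D−k} (1−ε)^i·ε·((1−ε)^k + a(k+i+1)) for k ≤ D, and let g : ℕ → ℝ satisfy g(m) = 0 for m > D, g(D) = ε·(1−ε)^D, and g(k) = max_{0 ≤ i ≤ D−k} [ (1−ε)^k·(1−(1−ε)^{i+1}) + g(k+i+1) ] for k < D. Then a(0) > 2 − δ and g(0) < 1; in particular a(0) > (2 − δ)·g(0). (Lower bound in Theorem 3.1: the adaptivity gap for monotone submodular stochastic probing is at least 2.) -/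

import Mathlib

-- Bernoulli-type: (1 + n ε)(1-ε)^n ≤ 1
lemma agap_bern (ε : ℝ) (hε0 : 0 ≤ ε) (hε1 : ε ≤ 1) :
    ∀ n : ℕ, (1 + n * ε) * (1 - ε)^n ≤ 1 := by
  intro n
  induction n with
  | zero => simp
  | succ n ih =>
    have hq0 : (0:ℝ) ≤ 1 - ε := by linarith
    have hpow : (1 - ε)^(n+1) ≤ 1 := pow_le_one₀ hq0 (by linarith)
    have hpn : (0:ℝ) ≤ (1 - ε)^n := pow_nonneg hq0 n
    have : (1 + (↑(n+1)) * ε) * (1-ε)^(n+1)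
        = (1-ε) * ((1 + n*ε) * (1-ε)^n) + ε * (1-ε)^(n+1) := by
      push_cast; ring
    rw [this]
    nlinarith [mul_le_mul_of_nonneg_left ih hq0]

lemma agap_step (ε : ℝ) (hε : ε ≠ 0) (D : ℕ) (a : ℕ → ℝ)
    (ha : ∀ k ≤ D, a k = ∑ i ∈ Finset.range (D - k + 1),
        (1 - ε)^i * ε * ((1 - ε)^k + a (k + i + 1)))
    (k : ℕ) (hk : k < D) :
    a k = a (k+1) + ε*(1-ε)^k + ε*(1-ε)^(k+1) - ε*(1-ε)^(D+1) := by
  obtain ⟨n, hn⟩ : ∃ n, D - (k+1) = n := ⟨_, rfl⟩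
  have hDk : D - k + 1 = n + 2 := by omega
  have h1 := ha k (le_of_lt hk)
  have h2 := ha (k+1) hk
  rw [hDk, Finset.sum_range_succ'] at h1
  rw [hn] at h2
  have hsum : ∑ i ∈ Finset.range (n+1), (1-ε)^(i+1) * ε * ((1-ε)^k + a (k + (i+1) + 1))
      = (1-ε) * ∑ i ∈ Finset.range (n+1), (1-ε)^i * ε * ((1-ε)^(k+1) + a (k+1+i+1))
        + ε^2 * (1-ε)^(k+1) * ∑ i ∈ Finset.range (n+1), (1-ε)^i := by
    rw [Finset.mul_sum, Finset.mul_sum, ← Finset.sum_add_distrib]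
    apply Finset.sum_congr rfl
    intro i _
    have he : k + (i+1) + 1 = k + 1 + i + 1 := by omega
    rw [he]
    ring
  rw [hsum, ← h2] at h1
  have hgeo : ∑ i ∈ Finset.range (n+1), (1-ε)^i = ((1-ε)^(n+1) - 1) / ((1-ε) - 1) := by
    exact geom_sum_eq (by intro h; apply hε; linarith) (n+1)
  have hD1 : D + 1 = (k+1) + (n+1) := by omega
  have hdiv : ε^2 * (1-ε)^(k+1) * (((1-ε)^(n+1) - 1) / ((1-ε) - 1))
      = ε * (1-ε)^(k+1) - ε * (1-ε)^(k+1) * (1-ε)^(n+1) := by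
    have h1e : (1-ε) - 1 = -ε := by ring
    rw [h1e, div_neg, ← neg_div, neg_sub]
    field_simp
  rw [hgeo, hdiv] at h1
  rw [h1, hD1, pow_add]
  ring
lemma agap_closed (ε : ℝ) (hε : ε ≠ 0) (D : ℕ) (a : ℕ → ℝ)
    (ha0 : ∀ m, D < m → a m = 0)
    (ha : ∀ k ≤ D, a k = ∑ i ∈ Finset.range (D - k + 1),
        (1 - ε)^i * ε * ((1 - ε)^k + a (k + i + 1))) :
    ∀ m ≤ D, a (D - m) = (2 - ε) * (1-ε)^(D - m) - (2 + ε * m) * (1-ε)^(D+1) := by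
  intro m
  induction m with
  | zero =>
    intro _
    have h := ha D le_rfl
    have hrr : D - D + 1 = 1 := by omega
    rw [hrr, Finset.sum_range_one, ha0 (D+0+1) (by omega)] at h
    simp only [Nat.sub_zero, Nat.cast_zero, pow_zero, add_zero, one_mul] at h ⊢
    rw [h, pow_succ]
    ring
  | succ m ih =>
    intro hm
    have ihm := ih (by omega)
    have hk : D - (m+1) < D := by omega
    have hstep := agap_step ε hε D a ha (D - (m+1)) hk
    have he1 : D - (m+1) + 1 = D - m := by omega
    rw [he1] at hstep
    rw [hstep, ihm]
    have he2 : D - m = (D - (m+1)) + 1 := by omega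
    rw [he2, pow_succ]
    push_cast
    ring

lemma agap_gnn (ε : ℝ) (hε0 : 0 ≤ ε) (hε1 : ε ≤ 1) (D : ℕ) (g : ℕ → ℝ)
    (hgD : g D = ε * (1 - ε)^D)
    (hg : ∀ k, (hk : k < D) → g k = (Finset.range (D - k + 1)).sup'
        (Finset.nonempty_range_iff.mpr (Nat.succ_ne_zero _))
        (fun i => (1 - ε)^k * (1 - (1 - ε)^(i+1)) + g (k + i + 1))) :
    ∀ m ≤ D, 0 ≤ g (D - m) := by
  have hq0 : (0:ℝ) ≤ 1 - ε := by linarith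
  intro m
  induction m with
  | zero =>
    intro _
    simp only [Nat.sub_zero, hgD]
    positivity
  | succ m ih =>
    intro hm
    have ihm := ih (by omega)
    have hk : D - (m+1) < D := by omega
    rw [hg _ hk]
    have h0 : 0 ∈ Finset.range (D - (D - (m+1)) + 1) := by
      simp [Finset.mem_range]
    refine le_trans ?_ (Finset.le_sup' _ h0)
    have he : D - (m+1) + 0 + 1 = D - m := by omega
    simp only [he]
    have h1 : (1-ε)^(0+1) ≤ 1 := pow_le_one₀ hq0 (by linarith)
    have h2 : (0:ℝ) ≤ (1-ε)^(D-(m+1)) := pow_nonneg hq0 _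
    nlinarith

lemma agap_glt (ε : ℝ) (hε0 : 0 < ε) (hε1 : ε < 1) (D : ℕ) (g : ℕ → ℝ)
    (hg0 : ∀ m, D < m → g m = 0)
    (hgD : g D = ε * (1 - ε)^D)
    (hg : ∀ k, (hk : k < D) → g k = (Finset.range (D - k + 1)).sup'
        (Finset.nonempty_range_iff.mpr (Nat.succ_ne_zero _))
        (fun i => (1 - ε)^k * (1 - (1 - ε)^(i+1)) + g (k + i + 1))) :
    ∀ k ≤ D, g k < (1-ε)^k := by
  have hq0 : (0:ℝ) < 1 - ε := by linarith
  have key : ∀ m, ∀ k, k ≤ D → D - k ≤ m → g k < (1-ε)^k := by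
    intro m
    induction m with
    | zero =>
      intro k hk hm
      have hkD : k = D := by omega
      rw [hkD, hgD]
      nlinarith [pow_pos hq0 D]
    | succ m ih =>
      intro k hk hm
      rcases eq_or_lt_of_le hk with h | h
      · rw [h, hgD]
        nlinarith [pow_pos hq0 D]
      · rw [hg _ h, Finset.sup'_lt_iff]
        intro i hi
        simp only [Finset.mem_range] at hi
        have hterm : g (k + i + 1) < (1-ε)^(k+i+1) := by
          rcases le_or_gt (k+i+1) D with hle | hgt
          · exact ih _ hle (by omega)
          · rw [hg0 _ hgt]; exact pow_pos hq0 _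
        have hpe : (1-ε)^(k+i+1) = (1-ε)^k * (1-ε)^(i+1) := pow_add _ k (i+1)
        nlinarith
  intro k hk
  exact key (D - k) k hk le_rfl

set_option maxHeartbeats 1000000 in
/-- Lower bound in Theorem 3.1: in the finite lower-bound example, the adaptive
value `a(0)` exceeds `2 − δ` while the optimal non-adaptive value `g(0)` is
less than `1`; in particular `a(0) > (2 − δ)·g(0)`. -/
theorem submodular_adaptivity_gap_ge_two :
    ∀ δ : ℝ, 0 < δ →
    ∃ ε : ℝ, 0 < ε ∧ ε < 1/2 ∧
      ∀ D : ℕ, ((1 - ε)^D < ε^2 ∧ ∀ D' : ℕ, D' < D → ¬((1 - ε)^D' < ε^2)) →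
      ∀ a : ℕ → ℝ,
        (∀ m, D < m → a m = 0) →
        (∀ k ≤ D, a k = ∑ i ∈ Finset.range (D - k + 1),
            (1 - ε)^i * ε * ((1 - ε)^k + a (k + i + 1))) →
      ∀ g : ℕ → ℝ,
        (∀ m, D < m → g m = 0) →
        g D = ε * (1 - ε)^D →
        (∀ k < D, g k = (Finset.range (D - k + 1)).sup'
            (Finset.nonempty_range_iff.mpr (by omega))
            (fun i => (1 - ε)^k * (1 - (1 - ε)^(i+1)) + g (k + i + 1))) →
      a 0 > 2 - δ ∧ g 0 < 1 ∧ a 0 > (2 - δ) * g 0 := by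
  intro δ hδ
  refine ⟨min (δ/8) (1/4), lt_min (by linarith) (by norm_num), ?_, ?_⟩
  · calc min (δ/8) (1/4) ≤ 1/4 := min_le_right _ _
      _ < 1/2 := by norm_num
  set ε := min (δ/8) (1/4) with hεdef
  have hε0 : 0 < ε := lt_min (by linarith) (by norm_num)
  have hε4 : ε ≤ 1/4 := min_le_right _ _
  have hε8 : 8 * ε ≤ δ := by
    have := min_le_left (δ/8) (1/4); linarith [this]
  have hq0 : (0:ℝ) < 1 - ε := by linarith
  have hq1 : (1:ℝ) - ε ≤ 1 := by linarith
  intro D ⟨hD1, hD2⟩ a ha0 ha g hg0 hgD hg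
  -- D ≥ 3
  have hD3 : 2 < D := by
    by_contra hc
    push_neg at hc
    have h1 : (1-ε)^D ≥ (1-ε)^2 :=
      pow_le_pow_of_le_one hq0.le hq1 hc
    have h2 : ((3:ℝ)/4)^2 ≤ (1-ε)^2 := by
      apply pow_le_pow_left₀ (by norm_num)
      linarith
    nlinarith
  set h := D / 2 with hhdef
  have hh1 : 1 ≤ h := by omega
  have hD3h : D ≤ 3 * h := by omega
  have hsplit : h + (D - h) = D := by omega
  have h2Dh : D ≤ (D - h) * 2 := by omega
  have hqDpos : ∀ n : ℕ, (0:ℝ) < (1-ε)^n := fun n => pow_pos hq0 n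
  -- q^(D-h) < ε
  have hqDh : (1-ε)^(D - h) < ε := by
    have hs : ((1-ε)^(D-h))^2 ≤ (1-ε)^D := by
      rw [← pow_mul]
      exact pow_le_pow_of_le_one hq0.le hq1 h2Dh
    have : ((1-ε)^(D-h))^2 < ε^2 := lt_of_le_of_lt hs hD1
    nlinarith [hqDpos (D-h)]
  -- Bernoulli bound
  have hbern := agap_bern ε hε0.le (by linarith) h
  have hεh : ε * h * (1-ε)^h ≤ 1 := by nlinarith [hqDpos h]
  -- ε D q^(D+1) ≤ 3 ε
  have hkey : ε * D * (1-ε)^(D+1) ≤ 3 * ε := by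
    have e1 : (1-ε)^(D+1) ≤ (1-ε)^D := by
      rw [pow_succ]; nlinarith [hqDpos D]
    have e2 : (1-ε)^D = (1-ε)^h * (1-ε)^(D-h) := by
      rw [← pow_add, hsplit]
    have e3 : ε * D * (1-ε)^D ≤ ε * D * ((1-ε)^h * ε) := by
      have : (0:ℝ) ≤ ε * D := by positivity
      rw [e2]
      apply mul_le_mul_of_nonneg_left _ this
      exact mul_le_mul_of_nonneg_left hqDh.le (hqDpos h).le
    have e4 : ε * D * ((1-ε)^h * ε) ≤ ε * (3*h) * ((1-ε)^h * ε) := by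
      apply mul_le_mul_of_nonneg_right _ (by positivity)
      have : (D:ℝ) ≤ 3*h := by exact_mod_cast hD3h
      nlinarith
    have e5 : ε * (3*h) * ((1-ε)^h * ε) = 3 * ε * (ε * h * (1-ε)^h) := by ring
    have e6 : 3 * ε * (ε * h * (1-ε)^h) ≤ 3 * ε := by nlinarith
    have e0 : ε * D * (1-ε)^(D+1) ≤ ε * D * (1-ε)^D := by
      apply mul_le_mul_of_nonneg_left e1 (by positivity)
    linarith [e0, e3, e4, e6, e5.le, e5.ge]
  -- closed form for a 0
  have hclosed := agap_closed ε (ne_of_gt hε0) D a ha0 ha D le_rfl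
  rw [Nat.sub_self, pow_zero, mul_one] at hclosed
  have hq2 : (1-ε)^(D+1) < ε^2 := lt_of_le_of_lt
    (by rw [pow_succ]; nlinarith [hqDpos D]) hD1
  have hεsq : ε^2 ≤ ε/4 := by nlinarith
  have ha0big : a 0 > 2 - 5 * ε := by
    have expand : (2 + ε*(D:ℝ)) * (1-ε)^(D+1)
        = 2 * (1-ε)^(D+1) + ε * (D:ℝ) * (1-ε)^(D+1) := by ring
    rw [hclosed, expand]
    linarith [hq2, hkey, hεsq]
  have hA : a 0 > 2 - δ := by linarith
  -- g bounds
  have hG : g 0 < 1 := by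
    have := agap_glt ε hε0 (by linarith) D g hg0 hgD hg 0 (by omega)
    simpa using this
  have hGnn : 0 ≤ g 0 := by
    have := agap_gnn ε hε0.le (by linarith) D g hgD hg D le_rfl
    rwa [Nat.sub_self] at this
  refine ⟨hA, hG, ?_⟩
  rcases le_or_gt (2 - δ) 0 with hc | hc
  · have : (2 - δ) * g 0 ≤ 0 := mul_nonpos_of_nonpos_of_nonneg hc hGnn
    have ha0pos : 0 < a 0 := by linarith
    linarith
  · have : (2 - δ) * g 0 < (2 - δ) * 1 := by
      exact mul_lt_mul_of_pos_left hG hc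
    nlinarith
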